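/- Let (X, d̂) be a bounded metric space, ρ: F_∞ → Homeo(X) an action by homeomorphisms, s > log 3, and define δ := Σ_{g ∈ F_∞} exp(-s‖g‖)·d̂∘ρ(g)⁻¹. Then for every g ∈ F_∞ and all x, y ∈ X, exp(-s‖g‖)·δ(x,y) ≤ δ(ρ(g)x, ρ(g)y) ≤ exp(s‖g‖)·δ(x,y); in particular each ρ(g) is a bi-Lipschitz homeomorphism of (X, δ). -/
import Mathlib


/-- The group of self-homeomorphisms of `X`, under composition. -/
instance homeoGroup (X : Type*) [TopologicalSpace X] : Group (X ≃ₜ X) where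
  mul f g := g.trans f
  one := Homeomorph.refl X
  inv := Homeomorph.symm
  mul_assoc f g h := rfl
  one_mul f := by ext x; rfl
  mul_one f := by ext x; rfl
  inv_mul_cancel f := by ext x; exact f.symm_apply_apply x

/-- The embedding `F_∞ → F₂ = ⟨x,t⟩`, `x_i ↦ t^i x t^{-i}`. -/
def embed : FreeGroup ℕ →* FreeGroup Bool :=
  FreeGroup.lift fun i : ℕ =>
    (FreeGroup.of true : FreeGroup Bool) ^ i * FreeGroup.of false *
      ((FreeGroup.of true) ^ i)⁻¹

/-- Word length of `g ∈ F_∞`, measured in `F₂` via the embedding `x_i ↦ t^i x t^{-i}`. -/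
def wl (g : FreeGroup ℕ) : ℕ := (embed g).norm

/-- The averaged distance `δ(x,y) = ∑_{g ∈ F_∞} exp(-s‖g‖) d̂(ρ(g)⁻¹ x, ρ(g)⁻¹ y)`. -/
noncomputable def delta {X : Type*} [MetricSpace X] (ρ : FreeGroup ℕ →* (X ≃ₜ X)) (s : ℝ)
    (x y : X) : ℝ :=
  ∑' g : FreeGroup ℕ, Real.exp (-s * (wl g : ℝ)) * dist ((ρ g).symm x) ((ρ g).symm y)

lemma wl_mul_le (g h : FreeGroup ℕ) : wl (g * h) ≤ wl g + wl h := by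
  unfold wl
  rw [map_mul]
  exact FreeGroup.norm_mul_le _ _

lemma wl_inv (g : FreeGroup ℕ) : wl g⁻¹ = wl g := by
  unfold wl
  rw [map_inv]
  exact FreeGroup.norm_inv_eq

/-- With `δ = ∑_{g ∈ F_∞} exp(-s‖g‖) d̂ ∘ ρ(g)⁻¹` as above, every `ρ(g)` is bi-Lipschitz:
`exp(-s‖g‖) δ(x,y) ≤ δ(ρ(g)x, ρ(g)y) ≤ exp(s‖g‖) δ(x,y)`. -/
theorem delta_biLipschitz {X : Type*} [MetricSpace X] (C : ℝ)
    (hC : ∀ x y : X, dist x y ≤ C)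
    (ρ : FreeGroup ℕ →* (X ≃ₜ X)) (s : ℝ) (hs : Real.log 3 < s) :
    ∀ (g : FreeGroup ℕ) (x y : X),
      Real.exp (-s * (wl g : ℝ)) * delta ρ s x y ≤ delta ρ s (ρ g x) (ρ g y) ∧
      delta ρ s (ρ g x) (ρ g y) ≤ Real.exp (s * (wl g : ℝ)) * delta ρ s x y := by
  have hs0 : 0 < s := lt_trans (Real.log_pos (by norm_num)) hs
  intro g x y
  set a : FreeGroup ℕ → ℝ := fun k =>
    Real.exp (-s * (wl k : ℝ)) * dist ((ρ k).symm x) ((ρ k).symm y) with ha_def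
  set b : FreeGroup ℕ → ℝ := fun k =>
    Real.exp (-s * (wl (g * k) : ℝ)) * dist ((ρ k).symm x) ((ρ k).symm y) with hb_def
  -- δ(gx, gy) = ∑' k, b k
  have hsymm : ∀ (k : FreeGroup ℕ) (z : X), (ρ (g * k)).symm (ρ g z) = (ρ k).symm z := by
    intro k z
    have : (ρ (g * k)).symm = (ρ k).symm * (ρ g).symm := by
      have : (ρ (g * k))⁻¹ = (ρ k)⁻¹ * (ρ g)⁻¹ := by
        rw [map_mul, mul_inv_rev]
      exact this
    rw [this]
    show (ρ k).symm ((ρ g).symm (ρ g z)) = (ρ k).symm z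
    rw [Homeomorph.symm_apply_apply]
  have hdelta_eq : delta ρ s (ρ g x) (ρ g y) = ∑' k, b k := by
    unfold delta
    rw [← (Equiv.mulLeft g).tsum_eq]
    congr 1
    ext k
    simp only [Equiv.coe_mulLeft, hb_def, hsymm k x, hsymm k y]
  -- pointwise bounds
  have hlow : ∀ k, Real.exp (-s * (wl g : ℝ)) * a k ≤ b k := by
    intro k
    rw [ha_def, hb_def]
    simp only
    rw [← mul_assoc, ← Real.exp_add]
    apply mul_le_mul_of_nonneg_right _ dist_nonneg
    apply Real.exp_le_exp.mpr
    have h1 : (wl (g * k) : ℝ) ≤ (wl g : ℝ) + (wl k : ℝ) := by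
      exact_mod_cast wl_mul_le g k
    nlinarith [hs0.le]
  have hhigh : ∀ k, b k ≤ Real.exp (s * (wl g : ℝ)) * a k := by
    intro k
    rw [ha_def, hb_def]
    simp only
    rw [← mul_assoc, ← Real.exp_add]
    apply mul_le_mul_of_nonneg_right _ dist_nonneg
    apply Real.exp_le_exp.mpr
    have h1 : wl k ≤ wl g + wl (g * k) := by
      have := wl_mul_le g⁻¹ (g * k)
      rw [inv_mul_cancel_left, wl_inv] at this
      exact this
    have h1' : (wl k : ℝ) ≤ (wl g : ℝ) + (wl (g * k) : ℝ) := by exact_mod_cast h1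
    nlinarith [hs0.le]
  have hb_nonneg : ∀ k, 0 ≤ b k := fun k =>
    mul_nonneg (Real.exp_nonneg _) dist_nonneg
  have ha_nonneg : ∀ k, 0 ≤ a k := fun k =>
    mul_nonneg (Real.exp_nonneg _) dist_nonneg
  by_cases ha : Summable a
  · have hb : Summable b :=
      Summable.of_nonneg_of_le hb_nonneg hhigh (ha.mul_left _)
    constructor
    · rw [hdelta_eq]
      calc Real.exp (-s * (wl g : ℝ)) * delta ρ s x y
          = ∑' k, Real.exp (-s * (wl g : ℝ)) * a k := (ha.tsum_mul_left _).symm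
        _ ≤ ∑' k, b k := Summable.tsum_le_tsum hlow (ha.mul_left _) hb
    · rw [hdelta_eq]
      calc ∑' k, b k ≤ ∑' k, Real.exp (s * (wl g : ℝ)) * a k :=
            Summable.tsum_le_tsum hhigh hb (ha.mul_left _)
        _ = Real.exp (s * (wl g : ℝ)) * delta ρ s x y := ha.tsum_mul_left _
  · have hb : ¬ Summable b := by
      intro hb
      apply ha
      have : Summable (fun k => Real.exp (s * (wl g : ℝ)) * b k) := hb.mul_left _
      apply Summable.of_nonneg_of_le ha_nonneg _ this
      intro k
      have := hlow k
      calc a k = Real.exp (s * (wl g : ℝ)) * (Real.exp (-s * (wl g : ℝ)) * a k) := by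
            rw [← mul_assoc, ← Real.exp_add]; ring_nf; simp
        _ ≤ Real.exp (s * (wl g : ℝ)) * b k :=
            mul_le_mul_of_nonneg_left (hlow k) (Real.exp_nonneg _)
    have h1 : delta ρ s x y = 0 := tsum_eq_zero_of_not_summable ha
    have h2 : delta ρ s (ρ g x) (ρ g y) = 0 := by
      rw [hdelta_eq]; exact tsum_eq_zero_of_not_summable hb
    rw [h1, h2]
    simp
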